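/- For points x_1,…,x_n ∈ R^p with max_i ‖x_i‖ ≤ 1 and X ∈ R^{p×n} centered (X·1_n = 0), the operator norm satisfies ‖Σ_{t∈T} L_t X^T X L_t‖ ≤ 7n^2, where T is the set of all triples (i,j,k) of distinct indices with j < k and L_t = e_i e_k^T + e_k e_i^T − e_i e_j^T − e_j e_i^T + e_j e_j^T − e_k e_k^T. -/

import Mathlib

open Matrix
open scoped Matrix.Norms.L2Operator

/-- `L_t = e_i e_kᵀ + e_k e_iᵀ − e_i e_jᵀ − e_j e_iᵀ + e_j e_jᵀ − e_k e_kᵀ`. -/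
def Lt {n : ℕ} (i j k : Fin n) : Matrix (Fin n) (Fin n) ℝ :=
  vecMulVec (Pi.single i 1) (Pi.single k 1) + vecMulVec (Pi.single k 1) (Pi.single i 1)
    - vecMulVec (Pi.single i 1) (Pi.single j 1) - vecMulVec (Pi.single j 1) (Pi.single i 1)
    + vecMulVec (Pi.single j 1) (Pi.single j 1) - vecMulVec (Pi.single k 1) (Pi.single k 1)

namespace SumLt

/-- Kronecker delta. -/
noncomputable def D {n : ℕ} (x y : Fin n) : ℝ := if x = y then 1 else 0

lemma D_symm {n : ℕ} (x y : Fin n) : D x y = D y x := by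
  unfold D; split_ifs with h1 h2 <;> first | rfl | (exfalso; simp_all [eq_comm])

lemma sum_ite_const {n : ℕ} {c : Prop} [Decidable c] (f : Fin n → ℝ) :
    ∑ x, (if c then f x else 0) = if c then ∑ x, f x else 0 := by
  split <;> simp

variable {n : ℕ} (G : Matrix (Fin n) (Fin n) ℝ)

lemma Lt_jj (i j : Fin n) : Lt i j j = 0 := by
  unfold Lt; abel

lemma Lt_swap (i j k : Fin n) : Lt i k j = - Lt i j k := by
  unfold Lt; abel

lemma entry9 (i j k a b : Fin n) : (Lt i j k * G * Lt i j k) a b =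
    D a i * D b i * (G k k - G k j - G j k + G j j)
  + D a i * D b j * (G k j - G j j - G k i + G j i)
  + D a i * D b k * (G k i - G j i - G k k + G j k)
  + D a j * D b i * (G j k - G i k - G j j + G i j)
  + D a j * D b j * (G j j - G i j - G j i + G i i)
  + D a j * D b k * (G j i - G i i - G j k + G i k)
  + D a k * D b i * (G i k - G k k - G i j + G k j)
  + D a k * D b j * (G i j - G k j - G i i + G k i)
  + D a k * D b k * (G i i - G k i - G i k + G k k) := by
  simp only [Lt, D, Matrix.sub_apply, Matrix.add_apply, Matrix.mul_apply,
    Matrix.vecMulVec_apply, Pi.single_apply, Finset.sum_sub_distrib, Finset.sum_add_distrib,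
    ite_mul, mul_ite, mul_zero, zero_mul, mul_one, one_mul, sub_mul, mul_sub, add_mul, mul_add,
    Finset.sum_ite_eq, Finset.sum_ite_eq', Finset.mem_univ, if_true, sum_ite_const]
  split_ifs <;> subst_vars
  all_goals (try contradiction)
  all_goals ring

variable (hrow : ∀ c, ∑ d, G c d = 0) (hcol : ∀ d, ∑ c, G c d = 0)

include hrow hcol in
lemma stage1 (j k a b : Fin n) : ∑ i, (Lt i j k * G * Lt i j k) a b =
    D a j * D b j * G j j * (n:ℝ) + D a j * D b j * (∑ c, G c c)
  - D a j * D b k * G j k * (n:ℝ) - D a j * D b k * (∑ c, G c c)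
  + D a j * G b j - D a j * G b k - D a j * G j j + D a j * G j k
  - D a k * D b j * G k j * (n:ℝ) - D a k * D b j * (∑ c, G c c)
  + D a k * D b k * G k k * (n:ℝ) + D a k * D b k * (∑ c, G c c)
  - D a k * G b j + D a k * G b k + D a k * G k j - D a k * G k k
  + D b a * G j j - D b a * G j k - D b a * G k j + D b a * G k k
  + D b j * G j a - D b j * G j j - D b j * G k a + D b j * G k j
  - D b k * G j a + D b k * G j k + D b k * G k a - D b k * G k k := by
  simp only [entry9 G]
  simp only [D, ite_mul, zero_mul, one_mul, mul_ite, mul_zero,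
    Finset.sum_add_distrib, Finset.sum_sub_distrib, sum_ite_const,
    Finset.sum_ite_eq, Finset.sum_ite_eq', Finset.mem_univ, if_true,
    Finset.sum_const, Finset.card_univ, Fintype.card_fin, smul_eq_mul,
    hrow, hcol]
  try simp only [← Finset.mul_sum, ← Finset.sum_mul, hrow, hcol, mul_zero, zero_mul]
  split_ifs <;> subst_vars
  all_goals (try contradiction)
  all_goals ring

include hrow hcol in
lemma stage2 (j a b : Fin n) : ∑ k, ∑ i, (Lt i j k * G * Lt i j k) a b =
      0
      + D a j * D b j * G j j * (n:ℝ) * (n:ℝ)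
      + D a j * D b j * (n:ℝ) * (∑ c, G c c)
      + D a j * G b j * (n:ℝ)
      - D a j * G j b * (n:ℝ)
      - D a j * G j j * (n:ℝ)
      - D a j * (∑ c, G c c)
      + D b a * G a a * (n:ℝ)
      + D b a * G j j * (n:ℝ)
      + 2 * D b a * (∑ c, G c c)
      - D b j * G a j * (n:ℝ)
      + D b j * G j a * (n:ℝ)
      - D b j * G j j * (n:ℝ)
      - D b j * (∑ c, G c c)
      - G a a
      + G a j
      + 2 * G b a
      - G b b
      - G b j
      - G j a
      + G j b := by
  simp only [stage1 G hrow hcol]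
  simp only [D, ite_mul, zero_mul, one_mul, mul_ite, mul_zero,
    Finset.sum_add_distrib, Finset.sum_sub_distrib, sum_ite_const,
    Finset.sum_ite_eq, Finset.sum_ite_eq', Finset.mem_univ, if_true,
    Finset.sum_const, Finset.card_univ, Fintype.card_fin, smul_eq_mul,
    hrow, hcol]
  try simp only [← Finset.mul_sum, ← Finset.sum_mul, hrow, hcol, mul_zero, zero_mul]
  split_ifs <;> subst_vars
  all_goals (try contradiction)
  all_goals ring

include hrow hcol in
lemma cube3 (a b : Fin n) : ∑ j : Fin n, ∑ k : Fin n, ∑ i : Fin n, (Lt i j k * G * Lt i j k) a b =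
      0
      + 2 * D b a * G a a * (n:ℝ) * (n:ℝ)
      + 4 * D b a * (n:ℝ) * (∑ c, G c c)
      - 2 * G a a * (n:ℝ)
      - 2 * G a b * (n:ℝ)
      + 4 * G b a * (n:ℝ)
      - 2 * G b b * (n:ℝ)
      - 2 * (∑ c, G c c) := by
  simp only [stage2 G hrow hcol]
  simp only [D, ite_mul, zero_mul, one_mul, mul_ite, mul_zero,
    Finset.sum_add_distrib, Finset.sum_sub_distrib, sum_ite_const,
    Finset.sum_ite_eq, Finset.sum_ite_eq', Finset.mem_univ, if_true,
    Finset.sum_const, Finset.card_univ, Fintype.card_fin, smul_eq_mul,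
    hrow, hcol]
  try simp only [← Finset.mul_sum, ← Finset.sum_mul, hrow, hcol, mul_zero, zero_mul]
  split_ifs <;> subst_vars
  all_goals (try contradiction)
  all_goals ring

include hrow hcol in
lemma q1lem (k a b : Fin n) : ∑ i, (Lt i i k * G * Lt i i k) a b =
      0
      + D a k * D b k * G k k * (n:ℝ)
      + D a k * D b k * (∑ c, G c c)
      - D a k * G b b
      + D a k * G b k
      + D a k * G k b
      - D a k * G k k
      + D b a * G a a
      - D b a * G a k
      - D b a * G k a
      + D b a * G k k
      - D b k * G a a
      + D b k * G a k
      + D b k * G k a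
      - D b k * G k k := by
  simp only [entry9 G]
  simp only [D, ite_mul, zero_mul, one_mul, mul_ite, mul_zero,
    Finset.sum_add_distrib, Finset.sum_sub_distrib, sum_ite_const,
    Finset.sum_ite_eq, Finset.sum_ite_eq', Finset.mem_univ, if_true,
    Finset.sum_const, Finset.card_univ, Fintype.card_fin, smul_eq_mul,
    hrow, hcol]
  try simp only [← Finset.mul_sum, ← Finset.sum_mul, hrow, hcol, mul_zero, zero_mul]
  split_ifs <;> subst_vars
  all_goals (try contradiction)
  all_goals ring

include hrow hcol in
lemma p1lem (a b : Fin n) : ∑ k : Fin n, ∑ i : Fin n, (Lt i i k * G * Lt i i k) a b =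
      0
      + 2 * D b a * G a a * (n:ℝ)
      + 2 * D b a * (∑ c, G c c)
      - 2 * G a a
      + 2 * G a b
      + 2 * G b a
      - 2 * G b b := by
  simp only [q1lem G hrow hcol]
  simp only [D, ite_mul, zero_mul, one_mul, mul_ite, mul_zero,
    Finset.sum_add_distrib, Finset.sum_sub_distrib, sum_ite_const,
    Finset.sum_ite_eq, Finset.sum_ite_eq', Finset.mem_univ, if_true,
    Finset.sum_const, Finset.card_univ, Fintype.card_fin, smul_eq_mul,
    hrow, hcol]
  try simp only [← Finset.mul_sum, ← Finset.sum_mul, hrow, hcol, mul_zero, zero_mul]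
  split_ifs <;> subst_vars
  all_goals (try contradiction)
  all_goals ring

include hrow hcol in
lemma q2lem (j a b : Fin n) : ∑ i, (Lt i j i * G * Lt i j i) a b =
      0
      + D a j * D b j * G j j * (n:ℝ)
      + D a j * D b j * (∑ c, G c c)
      - D a j * G b b
      + D a j * G b j
      + D a j * G j b
      - D a j * G j j
      + D b a * G a a
      - D b a * G a j
      - D b a * G j a
      + D b a * G j j
      - D b j * G a a
      + D b j * G a j
      + D b j * G j a
      - D b j * G j j := by
  simp only [entry9 G]
  simp only [D, ite_mul, zero_mul, one_mul, mul_ite, mul_zero,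
    Finset.sum_add_distrib, Finset.sum_sub_distrib, sum_ite_const,
    Finset.sum_ite_eq, Finset.sum_ite_eq', Finset.mem_univ, if_true,
    Finset.sum_const, Finset.card_univ, Fintype.card_fin, smul_eq_mul,
    hrow, hcol]
  try simp only [← Finset.mul_sum, ← Finset.sum_mul, hrow, hcol, mul_zero, zero_mul]
  split_ifs <;> subst_vars
  all_goals (try contradiction)
  all_goals ring

include hrow hcol in
lemma p2lem (a b : Fin n) : ∑ j : Fin n, ∑ i : Fin n, (Lt i j i * G * Lt i j i) a b =
      0
      + 2 * D b a * G a a * (n:ℝ)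
      + 2 * D b a * (∑ c, G c c)
      - 2 * G a a
      + 2 * G a b
      + 2 * G b a
      - 2 * G b b := by
  simp only [q2lem G hrow hcol]
  simp only [D, ite_mul, zero_mul, one_mul, mul_ite, mul_zero,
    Finset.sum_add_distrib, Finset.sum_sub_distrib, sum_ite_const,
    Finset.sum_ite_eq, Finset.sum_ite_eq', Finset.mem_univ, if_true,
    Finset.sum_const, Finset.card_univ, Fintype.card_fin, smul_eq_mul,
    hrow, hcol]
  try simp only [← Finset.mul_sum, ← Finset.sum_mul, hrow, hcol, mul_zero, zero_mul]
  split_ifs <;> subst_vars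
  all_goals (try contradiction)
  all_goals ring


include hrow hcol in
lemma Sentry (hsym : ∀ a b, G a b = G b a) (a b : Fin n) :
    (∑ t ∈ Finset.univ.filter
        (fun t : Fin n × Fin n × Fin n => t.1 ≠ t.2.1 ∧ t.1 ≠ t.2.2 ∧ t.2.1 < t.2.2),
      Lt t.1 t.2.1 t.2.2 * G * Lt t.1 t.2.1 t.2.2) a b
    = D b a * (((n:ℝ)^2 - 2*(n:ℝ)) * G a a + (2*(n:ℝ) - 2) * (∑ c, G c c))
      + ((n:ℝ) - 4) * G a b - ((n:ℝ) - 2) * (G a a + G b b) - (∑ c, G c c) := by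
  classical
  set g : Fin n × Fin n × Fin n → ℝ :=
    fun t => (Lt t.1 t.2.1 t.2.2 * G * Lt t.1 t.2.1 t.2.2) a b with hgdef
  have hg0 : ∀ i j : Fin n, g (i, j, j) = 0 := by
    intro i j
    simp only [hgdef, Lt_jj, zero_mul, mul_zero, Matrix.zero_apply]
  have hgswap : ∀ i j k : Fin n, g (i, k, j) = g (i, j, k) := by
    intro i j k
    simp only [hgdef, Lt_swap i j k, neg_mul, mul_neg, neg_neg]
  -- entry of matrix sum
  have hentry : (∑ t ∈ Finset.univ.filter
        (fun t : Fin n × Fin n × Fin n => t.1 ≠ t.2.1 ∧ t.1 ≠ t.2.2 ∧ t.2.1 < t.2.2),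
      Lt t.1 t.2.1 t.2.2 * G * Lt t.1 t.2.1 t.2.2) a b
      = ∑ t ∈ Finset.univ.filter
        (fun t : Fin n × Fin n × Fin n => t.1 ≠ t.2.1 ∧ t.1 ≠ t.2.2 ∧ t.2.1 < t.2.2), g t := by
    rw [Matrix.sum_apply]
  rw [hentry]
  set P : Fin n × Fin n × Fin n → Prop := fun t => t.1 ≠ t.2.1 ∧ t.1 ≠ t.2.2 with hPdef
  -- the T-filter is filter (P ∧ j < k)
  have hT : Finset.univ.filter
        (fun t : Fin n × Fin n × Fin n => t.1 ≠ t.2.1 ∧ t.1 ≠ t.2.2 ∧ t.2.1 < t.2.2)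
      = Finset.univ.filter (fun t => P t ∧ t.2.1 < t.2.2) := by
    apply Finset.filter_congr
    intro t _
    simp only [hPdef, and_assoc]
  rw [hT]
  -- swap bijection
  have hswapsum : ∑ t ∈ Finset.univ.filter (fun t => P t ∧ t.2.2 < t.2.1), g t
      = ∑ t ∈ Finset.univ.filter (fun t => P t ∧ t.2.1 < t.2.2), g t := by
    refine Finset.sum_bij' (fun t _ => (t.1, t.2.2, t.2.1)) (fun t _ => (t.1, t.2.2, t.2.1))
      ?_ ?_ ?_ ?_ ?_
    · intro t ht
      simp only [Finset.mem_filter, Finset.mem_univ, true_and, hPdef] at ht ⊢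
      exact ⟨⟨ht.1.2, ht.1.1⟩, ht.2⟩
    · intro t ht
      simp only [Finset.mem_filter, Finset.mem_univ, true_and, hPdef] at ht ⊢
      exact ⟨⟨ht.1.2, ht.1.1⟩, ht.2⟩
    · intro t _; rfl
    · intro t _; rfl
    · intro t _
      obtain ⟨i, j, k⟩ := t
      exact (hgswap i j k).symm
  -- split filter P by j < k
  have hsplitP : ∑ t ∈ Finset.univ.filter P, g t
      = 2 * ∑ t ∈ Finset.univ.filter (fun t => P t ∧ t.2.1 < t.2.2), g t := by
    rw [← Finset.sum_filter_add_sum_filter_not (Finset.univ.filter P)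
      (fun t => t.2.1 < t.2.2) g]
    rw [Finset.filter_filter]
    have h2 : Finset.filter (fun t => ¬ t.2.1 < t.2.2) (Finset.univ.filter P)
        = Finset.univ.filter (fun t => P t ∧ ¬ t.2.1 < t.2.2) := Finset.filter_filter _ _ _
    rw [h2]
    have h3 : ∑ t ∈ Finset.univ.filter (fun t => P t ∧ ¬ t.2.1 < t.2.2), g t
        = ∑ t ∈ Finset.univ.filter (fun t => P t ∧ t.2.2 < t.2.1), g t := by
      rw [← Finset.sum_filter_add_sum_filter_not
        (Finset.univ.filter (fun t => P t ∧ ¬ t.2.1 < t.2.2)) (fun t => t.2.2 < t.2.1) g]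
      rw [Finset.filter_filter, Finset.filter_filter]
      have h4 : ∑ t ∈ Finset.univ.filter (fun t => (P t ∧ ¬ t.2.1 < t.2.2) ∧ ¬ t.2.2 < t.2.1),
          g t = 0 := by
        apply Finset.sum_eq_zero
        intro t ht
        simp only [Finset.mem_filter, Finset.mem_univ, true_and] at ht
        have : t.2.1 = t.2.2 := le_antisymm (not_lt.1 ht.2) (not_lt.1 ht.1.2)
        obtain ⟨i, j, k⟩ := t
        simp only at this
        subst this
        exact hg0 i j
      rw [h4, add_zero]
      apply Finset.sum_congr
      · apply Finset.filter_congr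
        intro t _
        constructor
        · rintro ⟨⟨hp, _⟩, hlt⟩; exact ⟨hp, hlt⟩
        · rintro ⟨hp, hlt⟩; exact ⟨⟨hp, asymm hlt⟩, hlt⟩
      · intros; rfl
    rw [h3, hswapsum]
    ring
  -- split univ by P
  have huniv : ∑ t : Fin n × Fin n × Fin n, g t
      = ∑ t ∈ Finset.univ.filter P, g t + ∑ t ∈ Finset.univ.filter (fun t => ¬ P t), g t :=
    (Finset.sum_filter_add_sum_filter_not _ _ _).symm
  -- the complement of P
  have hcompl : ∑ t ∈ Finset.univ.filter (fun t => ¬ P t), g t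
      = (∑ k : Fin n, ∑ i : Fin n, g (i, i, k)) + ∑ j : Fin n, ∑ i : Fin n, g (i, j, i) := by
    rw [← Finset.sum_filter_add_sum_filter_not
      (Finset.univ.filter (fun t => ¬ P t)) (fun t => t.1 = t.2.1) g]
    rw [Finset.filter_filter, Finset.filter_filter]
    have e1 : ∑ t ∈ Finset.univ.filter (fun t => ¬ P t ∧ t.1 = t.2.1), g t
        = ∑ k : Fin n, ∑ i : Fin n, g (i, i, k) := by
      have estep : ∑ t ∈ Finset.univ.filter (fun t => ¬ P t ∧ t.1 = t.2.1), g t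
          = ∑ p : Fin n × Fin n, g (p.2, p.2, p.1) := by
        refine Finset.sum_bij' (fun (t : Fin n × Fin n × Fin n) _ => ((t.2.2, t.1) : Fin n × Fin n))
          (fun (s : Fin n × Fin n) _ => ((s.2, s.2, s.1) : Fin n × Fin n × Fin n)) ?_ ?_ ?_ ?_ ?_
        · intro t _; exact Finset.mem_univ _
        · intro s _
          simp [hPdef]
        · intro t ht
          simp only [Finset.mem_filter, Finset.mem_univ, true_and] at ht
          obtain ⟨i, j, k⟩ := t
          simp only at ht ⊢
          rw [ht.2]
        · intro s _; rfl
        · intro t ht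
          simp only [Finset.mem_filter, Finset.mem_univ, true_and] at ht
          obtain ⟨i, j, k⟩ := t
          simp only at ht ⊢
          rw [← ht.2]
      rw [estep, Fintype.sum_prod_type]
    have e2 : ∑ t ∈ Finset.univ.filter (fun t => ¬ P t ∧ ¬ t.1 = t.2.1), g t
        = ∑ j : Fin n, ∑ i : Fin n, g (i, j, i) := by
      have e3 : ∑ t ∈ Finset.univ.filter (fun t => ¬ P t ∧ ¬ t.1 = t.2.1), g t
          = ∑ t ∈ Finset.univ.filter
              (fun t : Fin n × Fin n × Fin n => t.1 = t.2.2 ∧ ¬ t.1 = t.2.1), g t := by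
        apply Finset.sum_congr
        · apply Finset.filter_congr
          intro t _
          simp only [hPdef, not_and_or, not_not]
          constructor
          · rintro ⟨hor, hne⟩
            rcases hor with h | h
            · exact absurd h hne
            · exact ⟨h, hne⟩
          · rintro ⟨heq, hne⟩
            exact ⟨Or.inr heq, hne⟩
        · intros; rfl
      rw [e3]
      have e4 : ∑ t ∈ Finset.univ.filter
          (fun t : Fin n × Fin n × Fin n => t.1 = t.2.2), g t
          = ∑ t ∈ Finset.univ.filter
              (fun t : Fin n × Fin n × Fin n => t.1 = t.2.2 ∧ t.1 = t.2.1), g t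
            + ∑ t ∈ Finset.univ.filter
              (fun t : Fin n × Fin n × Fin n => t.1 = t.2.2 ∧ ¬ t.1 = t.2.1), g t := by
        rw [← Finset.sum_filter_add_sum_filter_not
          (Finset.univ.filter (fun t : Fin n × Fin n × Fin n => t.1 = t.2.2))
          (fun t => t.1 = t.2.1) g]
        rw [Finset.filter_filter, Finset.filter_filter]
      have e5 : ∑ t ∈ Finset.univ.filter
          (fun t : Fin n × Fin n × Fin n => t.1 = t.2.2 ∧ t.1 = t.2.1), g t = 0 := by
        apply Finset.sum_eq_zero
        intro t ht
        simp only [Finset.mem_filter, Finset.mem_univ, true_and] at ht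
        obtain ⟨i, j, k⟩ := t
        simp only at ht
        obtain ⟨h1, h2⟩ := ht
        subst h2
        rw [← h1]
        exact hg0 i i
      have e6 : ∑ t ∈ Finset.univ.filter
          (fun t : Fin n × Fin n × Fin n => t.1 = t.2.2), g t
          = ∑ j : Fin n, ∑ i : Fin n, g (i, j, i) := by
        have estep : ∑ t ∈ Finset.univ.filter
            (fun t : Fin n × Fin n × Fin n => t.1 = t.2.2), g t
            = ∑ p : Fin n × Fin n, g (p.2, p.1, p.2) := by
          refine Finset.sum_bij' (fun (t : Fin n × Fin n × Fin n) _ => ((t.2.1, t.1) : Fin n × Fin n))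
            (fun (s : Fin n × Fin n) _ => ((s.2, s.1, s.2) : Fin n × Fin n × Fin n)) ?_ ?_ ?_ ?_ ?_
          · intro t _; exact Finset.mem_univ _
          · intro s _
            simp
          · intro t ht
            simp only [Finset.mem_filter, Finset.mem_univ, true_and] at ht
            obtain ⟨i, j, k⟩ := t
            simp only at ht ⊢
            rw [ht]
          · intro s _; rfl
          · intro t ht
            simp only [Finset.mem_filter, Finset.mem_univ, true_and] at ht
            obtain ⟨i, j, k⟩ := t
            simp only at ht ⊢
            rw [← ht]
        rw [estep, Fintype.sum_prod_type]
      have := e4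
      rw [e6, e5, zero_add] at this
      exact this.symm
    rw [e1, e2]
  -- the cube sum
  have hcube : ∑ t : Fin n × Fin n × Fin n, g t
      = ∑ j : Fin n, ∑ k : Fin n, ∑ i : Fin n, g (i, j, k) := by
    rw [Fintype.sum_prod_type]
    have : ∀ i : Fin n, ∑ p : Fin n × Fin n, g (i, p) = ∑ j : Fin n, ∑ k : Fin n, g (i, j, k) :=
      fun i => Fintype.sum_prod_type (fun p => g (i, p))
    simp only [this]
    rw [Finset.sum_comm]
    apply Finset.sum_congr rfl
    intro j _
    exact Finset.sum_comm
  -- plug in closed forms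
  have c1 := cube3 G hrow hcol a b
  have c2 := p1lem G hrow hcol a b
  have c3 := p2lem G hrow hcol a b
  have hnice1 : ∑ k : Fin n, ∑ i : Fin n, g (i, i, k)
      = ∑ k : Fin n, ∑ i : Fin n, (Lt i i k * G * Lt i i k) a b := rfl
  have hnice2 : ∑ j : Fin n, ∑ i : Fin n, g (i, j, i)
      = ∑ j : Fin n, ∑ i : Fin n, (Lt i j i * G * Lt i j i) a b := rfl
  have hnice3 : ∑ j : Fin n, ∑ k : Fin n, ∑ i : Fin n, g (i, j, k)
      = ∑ j : Fin n, ∑ k : Fin n, ∑ i : Fin n, (Lt i j k * G * Lt i j k) a b := rfl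
  have hfinal : (0
      + 2 * D b a * G a a * (n:ℝ) * (n:ℝ)
      + 4 * D b a * (n:ℝ) * (∑ c, G c c)
      - 2 * G a a * (n:ℝ)
      - 2 * G a b * (n:ℝ)
      + 4 * G b a * (n:ℝ)
      - 2 * G b b * (n:ℝ)
      - 2 * (∑ c, G c c))
      = 2 * ∑ t ∈ Finset.univ.filter (fun t => P t ∧ t.2.1 < t.2.2), g t
        + (0
      + 2 * D b a * G a a * (n:ℝ)
      + 2 * D b a * (∑ c, G c c)
      - 2 * G a a
      + 2 * G a b
      + 2 * G b a
      - 2 * G b b)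
        + (0
      + 2 * D b a * G a a * (n:ℝ)
      + 2 * D b a * (∑ c, G c c)
      - 2 * G a a
      + 2 * G a b
      + 2 * G b a
      - 2 * G b b) := by
    rw [← c1, ← hnice3, ← hcube, huniv, hcompl, hsplitP, hnice1, hnice2, c2, c3]
    ring
  have hG : G b a = G a b := hsym b a
  rw [hG] at hfinal
  nlinarith [hfinal]

end SumLt

open SumLt

lemma opnorm_le_of_row_col {n m : ℕ} (A : Matrix (Fin m) (Fin n) ℝ) (r : ℝ) (hr : 0 ≤ r)
    (hrow : ∀ a, ∑ b, |A a b| ≤ r) (hcol : ∀ b, ∑ a, |A a b| ≤ r) : ‖A‖ ≤ r := by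
  rw [Matrix.l2_opNorm_def]
  apply ContinuousLinearMap.opNorm_le_bound _ hr
  intro x
  have hxnn : ∀ b, (0:ℝ) ≤ x b ^ 2 := fun b => sq_nonneg _
  have key : ∀ a, (∑ b, A a b * x b) ^ 2 ≤ r * ∑ b, |A a b| * x b ^ 2 := by
    intro a
    have h1 : (∑ b, A a b * x b) ^ 2 ≤ (∑ b, |A a b| * |x b|) ^ 2 := by
      calc (∑ b, A a b * x b) ^ 2 = |∑ b, A a b * x b| ^ 2 := (sq_abs _).symm
        _ ≤ (∑ b, |A a b| * |x b|) ^ 2 := by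
            apply pow_le_pow_left₀ (abs_nonneg _)
            refine (Finset.abs_sum_le_sum_abs _ _).trans ?_
            simp [abs_mul, le_refl]
    refine h1.trans ?_
    have h2 : (∑ b, |A a b| * |x b|) ^ 2
        ≤ (∑ b, Real.sqrt (|A a b|) ^ 2) * ∑ b, (Real.sqrt (|A a b|) * |x b|) ^ 2 := by
      have := Finset.sum_mul_sq_le_sq_mul_sq Finset.univ
        (fun b => Real.sqrt (|A a b|)) (fun b => Real.sqrt (|A a b|) * |x b|)
      calc (∑ b, |A a b| * |x b|) ^ 2
          = (∑ b, Real.sqrt (|A a b|) * (Real.sqrt (|A a b|) * |x b|)) ^ 2 := by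
            congr 1; apply Finset.sum_congr rfl; intro b _
            rw [← mul_assoc, Real.mul_self_sqrt (abs_nonneg _)]
        _ ≤ _ := this
    refine h2.trans ?_
    have e1 : ∀ b, Real.sqrt (|A a b|) ^ 2 = |A a b| := fun b => Real.sq_sqrt (abs_nonneg _)
    have e2 : ∀ b, (Real.sqrt (|A a b|) * |x b|) ^ 2 = |A a b| * x b ^ 2 := by
      intro b; rw [mul_pow, e1, sq_abs]
    simp only [e1, e2]
    exact mul_le_mul_of_nonneg_right (hrow a) (Finset.sum_nonneg fun b _ =>
      mul_nonneg (abs_nonneg _) (sq_nonneg _))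
  have hnorm : ‖(Matrix.toEuclideanLin.trans LinearMap.toContinuousLinearMap A) x‖
      = Real.sqrt (∑ a, (∑ b, A a b * x b) ^ 2) := by
    rw [EuclideanSpace.norm_eq]
    congr 1
    apply Finset.sum_congr rfl
    intro a _
    rw [Real.norm_eq_abs, sq_abs]
    congr 1
  rw [hnorm]
  have h3 : (∑ a, (∑ b, A a b * x b) ^ 2) ≤ r * r * ∑ b, x b ^ 2 := by
    calc (∑ a, (∑ b, A a b * x b) ^ 2) ≤ ∑ a, r * ∑ b, |A a b| * x b ^ 2 :=
          Finset.sum_le_sum fun a _ => key a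
      _ = r * ∑ b, (∑ a, |A a b|) * x b ^ 2 := by
          rw [← Finset.mul_sum, Finset.sum_comm]
          congr 1; apply Finset.sum_congr rfl; intro b _; rw [Finset.sum_mul]
      _ ≤ r * ∑ b, r * x b ^ 2 := by
          apply mul_le_mul_of_nonneg_left _ hr
          exact Finset.sum_le_sum fun b _ => mul_le_mul_of_nonneg_right (hcol b) (hxnn b)
      _ = r * r * ∑ b, x b ^ 2 := by rw [← Finset.mul_sum]; ring
  calc Real.sqrt (∑ a, (∑ b, A a b * x b) ^ 2) ≤ Real.sqrt (r * r * ∑ b, x b ^ 2) :=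
        Real.sqrt_le_sqrt h3
    _ = r * Real.sqrt (∑ b, x b ^ 2) := by
        rw [Real.sqrt_mul (mul_nonneg hr hr), Real.sqrt_mul_self hr]
    _ = r * ‖x‖ := by
        simp [EuclideanSpace.norm_eq, Real.norm_eq_abs, sq_abs]


/-- If the columns of `X` have Euclidean norm at most `1` and `X` is centered
(`X·1ₙ = 0`), then the spectral norm of `Σ_{t ∈ T} L_t Xᵀ X L_t` is at most `7n²`,
where `T` is the set of triples `(i,j,k)` of distinct indices with `j < k`. -/
theorem sum_Lt_XtX_Lt_norm_le {p n : ℕ} (X : Matrix (Fin p) (Fin n) ℝ)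
    (hnorm : ∀ i, Real.sqrt (∑ a, (X a i) ^ 2) ≤ 1)
    (hcen : X *ᵥ (1 : Fin n → ℝ) = 0) :
    ‖∑ t ∈ Finset.univ.filter
        (fun t : Fin n × Fin n × Fin n => t.1 ≠ t.2.1 ∧ t.1 ≠ t.2.2 ∧ t.2.1 < t.2.2),
      Lt t.1 t.2.1 t.2.2 * (Xᵀ * X) * Lt t.1 t.2.1 t.2.2‖ ≤ 7 * (n : ℝ) ^ 2 := by
  classical
  set G : Matrix (Fin n) (Fin n) ℝ := Xᵀ * X with hGdef
  have hsym : ∀ a b, G a b = G b a := by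
    intro a b
    simp only [hGdef, Matrix.mul_apply, Matrix.transpose_apply]
    exact Finset.sum_congr rfl fun c _ => mul_comm _ _
  have hcenk : ∀ q : Fin p, ∑ d, X q d = 0 := by
    intro q
    have := congrFun hcen q
    simpa [Matrix.mulVec, dotProduct] using this
  have hrow : ∀ c, ∑ d, G c d = 0 := by
    intro c
    simp only [hGdef, Matrix.mul_apply, Matrix.transpose_apply]
    rw [Finset.sum_comm]
    rw [Finset.sum_eq_zero]
    intro q _
    rw [← Finset.mul_sum, hcenk q, mul_zero]
  have hcol : ∀ d, ∑ c, G c d = 0 := by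
    intro d
    calc ∑ c, G c d = ∑ c, G d c := Finset.sum_congr rfl fun c _ => hsym c d
      _ = 0 := hrow d
  have hsq : ∀ a, ∑ q, (X q a) ^ 2 ≤ 1 := by
    intro a
    have h0 : (0:ℝ) ≤ ∑ q, (X q a) ^ 2 := Finset.sum_nonneg fun q _ => sq_nonneg _
    have := hnorm a
    nlinarith [Real.sq_sqrt h0, Real.sqrt_nonneg (∑ q, (X q a) ^ 2)]
  have habs : ∀ a b, |G a b| ≤ 1 := by
    intro a b
    have hG : G a b = ∑ q, X q a * X q b := by
      simp only [hGdef, Matrix.mul_apply, Matrix.transpose_apply]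
    have hcs := Finset.sum_mul_sq_le_sq_mul_sq Finset.univ (fun q => X q a) (fun q => X q b)
    have h1 : (G a b) ^ 2 ≤ 1 := by
      rw [hG]
      calc (∑ q, X q a * X q b) ^ 2 ≤ (∑ q, (X q a) ^ 2) * ∑ q, (X q b) ^ 2 := hcs
        _ ≤ 1 := by
            have ha := hsq a; have hb := hsq b
            have h0a : (0:ℝ) ≤ ∑ q, (X q a) ^ 2 := Finset.sum_nonneg fun q _ => sq_nonneg _
            have h0b : (0:ℝ) ≤ ∑ q, (X q b) ^ 2 := Finset.sum_nonneg fun q _ => sq_nonneg _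
            nlinarith
    nlinarith [abs_nonneg (G a b), sq_abs (G a b)]
  have hdiag : ∀ a, 0 ≤ G a a := by
    intro a
    simp only [hGdef, Matrix.mul_apply, Matrix.transpose_apply]
    exact Finset.sum_nonneg fun q _ => mul_self_nonneg _
  have htr0 : 0 ≤ ∑ c, G c c := Finset.sum_nonneg fun c _ => hdiag c
  have htrn : ∑ c, G c c ≤ (n:ℝ) := by
    calc ∑ c, G c c ≤ ∑ _c : Fin n, (1:ℝ) :=
          Finset.sum_le_sum fun c _ => (le_abs_self _).trans (habs c c)
      _ = (n:ℝ) := by simp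
  by_cases hn3 : 3 ≤ n
  · -- main case
    have hn : (3:ℝ) ≤ (n:ℝ) := by exact_mod_cast hn3
    set tr : ℝ := ∑ c, G c c with htrdef
    have hform := Sentry G hrow hcol hsym
    -- uniform bound for row sums of the closed form
    have key : ∀ a : Fin n, (∑ b, |D b a * (((n:ℝ)^2 - 2*(n:ℝ)) * G a a + (2*(n:ℝ) - 2) * tr)
        + ((n:ℝ) - 4) * G a b - ((n:ℝ) - 2) * (G a a + G b b) - tr|) ≤ 7 * (n:ℝ) ^ 2 := by
      intro a
      have hb1 : ∀ b : Fin n, |D b a * (((n:ℝ)^2 - 2*(n:ℝ)) * G a a + (2*(n:ℝ) - 2) * tr)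
          + ((n:ℝ) - 4) * G a b - ((n:ℝ) - 2) * (G a a + G b b) - tr|
          ≤ (if b = a then 3*(n:ℝ)^2 - 4 else 4*(n:ℝ) - 4) := by
        intro b
        by_cases hba : b = a
        · subst hba
          simp only [if_true, D, if_pos rfl]
          have h1 := abs_le.1 (habs b b)
          rw [abs_le]
          constructor <;> nlinarith [h1.1, h1.2, htr0, htrn, hn, sq_nonneg ((n:ℝ) - 3)]
        · rw [if_neg hba]
          have hD : D b a = 0 := by simp [D, hba]
          rw [hD, zero_mul, zero_add]
          have h1 := abs_le.1 (habs a b)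
          have h2 := abs_le.1 (habs a a)
          have h3 := abs_le.1 (habs b b)
          rw [abs_le]
          constructor <;> nlinarith [h1.1, h1.2, h2.1, h2.2, h3.1, h3.2, htr0, htrn, hn]
      calc (∑ b, |D b a * (((n:ℝ)^2 - 2*(n:ℝ)) * G a a + (2*(n:ℝ) - 2) * tr)
            + ((n:ℝ) - 4) * G a b - ((n:ℝ) - 2) * (G a a + G b b) - tr|)
          ≤ ∑ b : Fin n, (if b = a then 3*(n:ℝ)^2 - 4 else 4*(n:ℝ) - 4) :=
            Finset.sum_le_sum fun b _ => hb1 b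
        _ = (3*(n:ℝ)^2 - 4) + ((n:ℝ) - 1) * (4*(n:ℝ) - 4) := by
            have : ∀ b : Fin n, (if b = a then 3*(n:ℝ)^2 - 4 else 4*(n:ℝ) - 4)
                = (4*(n:ℝ) - 4) + (if b = a then (3*(n:ℝ)^2 - 4) - (4*(n:ℝ) - 4) else 0) := by
              intro b; split_ifs <;> ring
            simp only [this, Finset.sum_add_distrib, Finset.sum_const, Finset.card_univ,
              Fintype.card_fin, smul_eq_mul, Finset.sum_ite_eq', Finset.mem_univ, if_true]
            ring
        _ ≤ 7 * (n:ℝ) ^ 2 := by nlinarith [hn]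
    apply opnorm_le_of_row_col _ (7 * (n:ℝ) ^ 2) (by positivity)
    · intro a
      calc ∑ b, |(∑ t ∈ Finset.univ.filter
            (fun t : Fin n × Fin n × Fin n => t.1 ≠ t.2.1 ∧ t.1 ≠ t.2.2 ∧ t.2.1 < t.2.2),
          Lt t.1 t.2.1 t.2.2 * G * Lt t.1 t.2.1 t.2.2) a b|
          = ∑ b, |D b a * (((n:ℝ)^2 - 2*(n:ℝ)) * G a a + (2*(n:ℝ) - 2) * tr)
            + ((n:ℝ) - 4) * G a b - ((n:ℝ) - 2) * (G a a + G b b) - tr| := by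
            apply Finset.sum_congr rfl
            intro b _
            rw [hform a b]
        _ ≤ 7 * (n:ℝ) ^ 2 := key a
    · intro b
      have hsymform : ∀ a : Fin n, D b a * (((n:ℝ)^2 - 2*(n:ℝ)) * G a a + (2*(n:ℝ) - 2) * tr)
            + ((n:ℝ) - 4) * G a b - ((n:ℝ) - 2) * (G a a + G b b) - tr
          = D a b * (((n:ℝ)^2 - 2*(n:ℝ)) * G b b + (2*(n:ℝ) - 2) * tr)
            + ((n:ℝ) - 4) * G b a - ((n:ℝ) - 2) * (G b b + G a a) - tr := by
        intro a
        rw [D_symm b a, hsym a b]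
        by_cases hab : a = b
        · subst hab; ring
        · have hD : D a b = 0 := by simp [D, hab]
          rw [hD]; ring
      calc ∑ a, |(∑ t ∈ Finset.univ.filter
            (fun t : Fin n × Fin n × Fin n => t.1 ≠ t.2.1 ∧ t.1 ≠ t.2.2 ∧ t.2.1 < t.2.2),
          Lt t.1 t.2.1 t.2.2 * G * Lt t.1 t.2.1 t.2.2) a b|
          = ∑ a, |D a b * (((n:ℝ)^2 - 2*(n:ℝ)) * G b b + (2*(n:ℝ) - 2) * tr)
            + ((n:ℝ) - 4) * G b a - ((n:ℝ) - 2) * (G b b + G a a) - tr| := by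
            apply Finset.sum_congr rfl
            intro a _
            rw [hform a b, hsymform a]
        _ ≤ 7 * (n:ℝ) ^ 2 := key b
  · -- degenerate case : n ≤ 2, the index set is empty
    have hempty : Finset.univ.filter
        (fun t : Fin n × Fin n × Fin n => t.1 ≠ t.2.1 ∧ t.1 ≠ t.2.2 ∧ t.2.1 < t.2.2) = ∅ := by
      apply Finset.filter_eq_empty_iff.mpr
      rintro ⟨i, j, k⟩ _ ⟨h1, h2, h3⟩
      have hij : (i:ℕ) ≠ (j:ℕ) := fun h => h1 (Fin.ext h)
      have hik : (i:ℕ) ≠ (k:ℕ) := fun h => h2 (Fin.ext h)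
      have hjk : (j:ℕ) < (k:ℕ) := h3
      have hi := i.isLt
      have hj := j.isLt
      have hk := k.isLt
      omega
    rw [hempty, Finset.sum_empty, norm_zero]
    positivity
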